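/- Let n ≥ 1, let p ∈ ℝ^n satisfy 0 = p_0 < p_1 < ⋯ < p_n < 1, and let ε ∈ ℝ^n satisfy max_i |ε_i| ≤ (1/2)·min{ min_{1≤i≤n}(p_i − p_{i−1}), (1−p_n)/n }. Then ∑_{j=1}^n (p_j − p_{j−1})·ln((p_j − p_{j−1})/(p_j − p_{j−1} − ε_j)) + (1−p_n)·ln((1−p_n)/(1−p_n + ∑_{j=1}^n ε_j)) ≤ 2·εᵀ B_KL(p) ε, i.e. the left-hand side is at most 2·( ∑_{j=1}^n ε_j²/(p_j − p_{j−1}) + (∑_{j=1}^n ε_j)²/(1−p_n) ). -/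

import Mathlib

private lemma key_log (x : ℝ) (hx : x ≤ 1/2) : -Real.log (1 - x) ≤ x + 2 * x ^ 2 := by
  have h1 : (0:ℝ) < 1 - x := by linarith
  have h2 : Real.log (1 / (1 - x)) ≤ 1 / (1 - x) - 1 :=
    Real.log_le_sub_one_of_pos (by positivity)
  rw [Real.log_div one_ne_zero h1.ne', Real.log_one, zero_sub] at h2
  have h3 : 1 / (1 - x) - 1 = x / (1 - x) := by field_simp; ring
  rw [h3] at h2
  have h4 : x / (1 - x) ≤ x + 2 * x ^ 2 := by
    rw [div_le_iff₀ h1]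
    nlinarith [sq_nonneg x]
  linarith

private lemma key_term (a e : ℝ) (ha : 0 < a) (he : e ≤ a / 2) :
    a * Real.log (a / (a - e)) ≤ e + 2 * e ^ 2 / a := by
  have hae : 0 < a - e := by linarith
  have hx : e / a ≤ 1 / 2 := by rw [div_le_div_iff₀ ha two_pos]; linarith
  have h := key_log (e / a) hx
  have h1 : (1 : ℝ) - e / a = (a - e) / a := by field_simp
  rw [h1, Real.log_div hae.ne' ha.ne'] at h
  have h2 : Real.log (a / (a - e)) = Real.log a - Real.log (a - e) := by
    rw [Real.log_div ha.ne' hae.ne']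
  rw [h2]
  have h3 : a * (Real.log a - Real.log (a - e)) ≤ a * (e / a + 2 * (e / a) ^ 2) := by
    have := mul_le_mul_of_nonneg_left h ha.le
    linarith [this]
  calc a * (Real.log a - Real.log (a - e)) ≤ a * (e / a + 2 * (e / a) ^ 2) := h3
    _ = e + 2 * e ^ 2 / a := by field_simp

/-- KL-divergence bound: for `0 = p₀ < p₁ < ⋯ < pₙ < 1` and a perturbation `ε` that is
entrywise small enough, the KL divergence between the perturbed and unperturbed discrete
distributions is bounded by twice the quadratic form `εᵀ B_KL(p) ε`. -/
theorem kl_div_le_two_quadratic_form (n : ℕ) (hn : 1 ≤ n) (p ε : ℕ → ℝ)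
    (hp0 : p 0 = 0)
    (hmono : ∀ i, i < n → p i < p (i + 1))
    (hpn : p n < 1)
    (hε : ∀ j ∈ Finset.Icc 1 n,
      (∀ i ∈ Finset.Icc 1 n, |ε j| ≤ (p i - p (i - 1)) / 2) ∧
      |ε j| ≤ (1 - p n) / (2 * n)) :
    (∑ j ∈ Finset.Icc 1 n,
        (p j - p (j - 1)) * Real.log ((p j - p (j - 1)) / (p j - p (j - 1) - ε j)))
      + (1 - p n) * Real.log ((1 - p n) / (1 - p n + ∑ j ∈ Finset.Icc 1 n, ε j))
    ≤ 2 * ((∑ j ∈ Finset.Icc 1 n, (ε j) ^ 2 / (p j - p (j - 1)))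
        + (∑ j ∈ Finset.Icc 1 n, ε j) ^ 2 / (1 - p n)) := by
  have hpos : ∀ j ∈ Finset.Icc 1 n, 0 < p j - p (j - 1) := by
    intro j hj
    rw [Finset.mem_Icc] at hj
    have h1 : j - 1 < n := by omega
    have := hmono (j - 1) h1
    rw [Nat.sub_add_cancel hj.1] at this; linarith
  -- termwise bound for the sum
  have hterm : ∀ j ∈ Finset.Icc 1 n,
      (p j - p (j - 1)) * Real.log ((p j - p (j - 1)) / (p j - p (j - 1) - ε j))
      ≤ ε j + 2 * (ε j) ^ 2 / (p j - p (j - 1)) := by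
    intro j hj
    refine key_term _ _ (hpos j hj) ?_
    have h := (hε j hj).1 j hj
    exact le_trans (le_abs_self _) h
  have hsum1 : (∑ j ∈ Finset.Icc 1 n,
        (p j - p (j - 1)) * Real.log ((p j - p (j - 1)) / (p j - p (j - 1) - ε j)))
      ≤ ∑ j ∈ Finset.Icc 1 n, (ε j + 2 * (ε j) ^ 2 / (p j - p (j - 1))) :=
    Finset.sum_le_sum hterm
  -- last term
  have h1pn : 0 < 1 - p n := by linarith
  set S := ∑ j ∈ Finset.Icc 1 n, ε j with hS
  have hSbound : |S| ≤ (1 - p n) / 2 := by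
    calc |S| ≤ ∑ j ∈ Finset.Icc 1 n, |ε j| := Finset.abs_sum_le_sum_abs _ _
      _ ≤ ∑ j ∈ Finset.Icc 1 n, (1 - p n) / (2 * n) :=
          Finset.sum_le_sum fun j hj => (hε j hj).2
      _ = (n : ℝ) * ((1 - p n) / (2 * n)) := by
          rw [Finset.sum_const, Nat.card_Icc]
          simp [nsmul_eq_mul]
      _ = (1 - p n) / 2 := by
          have hn' : (n : ℝ) ≠ 0 := by positivity
          field_simp
  have hlast : (1 - p n) * Real.log ((1 - p n) / (1 - p n + S))
      ≤ -S + 2 * S ^ 2 / (1 - p n) := by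
    have := key_term (1 - p n) (-S) h1pn (by
      have := neg_abs_le S
      linarith [hSbound])
    simpa [sub_neg_eq_add] using this
  -- combine
  have hsplit : ∑ j ∈ Finset.Icc 1 n, (ε j + 2 * (ε j) ^ 2 / (p j - p (j - 1)))
      = S + 2 * ∑ j ∈ Finset.Icc 1 n, (ε j) ^ 2 / (p j - p (j - 1)) := by
    rw [Finset.sum_add_distrib, Finset.mul_sum]
    congr 1
    exact Finset.sum_congr rfl fun x _ => by ring
  have := add_le_add hsum1 hlast
  rw [hsplit] at this
  calc (∑ j ∈ Finset.Icc 1 n,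
        (p j - p (j - 1)) * Real.log ((p j - p (j - 1)) / (p j - p (j - 1) - ε j)))
      + (1 - p n) * Real.log ((1 - p n) / (1 - p n + S))
      ≤ S + 2 * ∑ j ∈ Finset.Icc 1 n, (ε j) ^ 2 / (p j - p (j - 1))
        + (-S + 2 * S ^ 2 / (1 - p n)) := this
    _ = 2 * ((∑ j ∈ Finset.Icc 1 n, (ε j) ^ 2 / (p j - p (j - 1)))
        + S ^ 2 / (1 - p n)) := by ring
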